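/- Completeness with respect to the inductive characterization of regular semantics: for every logic program with coclauses (P,coP), every finite set H of finite atoms, every goal ⟨A1,...,An | E⟩ and every ground substitution σ ∈ sol(E) defined on all variables of H and of A1,...,An, if for every i ∈ {1,...,n} the judgment (Hσ ⊢ Aiσ) belongs to the inductive interpretation of Loop(P,coP), then there exist a finite set of equations E' and θ ∈ sol(E') such that P;coP ⊢ H : ⟨A1,...,An | E⟩ ⇒ E' is derivable and σ ⊑ θ. -/

import Mathlib

/- Framework: flexible coinductive logic programming (logic programs with coclauses).
   Terms are possibly infinite trees, modelled as M-types of a polynomial functor. -/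

namespace FlexLP

/-- A first-order signature: function symbols and predicate symbols, each with an arity.
Variables are represented by natural numbers (a countably infinite set). -/
structure Sig where
  Func : Type
  far : Func → ℕ
  Pred : Type
  par : Pred → ℕ

/-- Polynomial functor whose M-type is the type of possibly infinite terms:
nodes are labelled by function symbols (with `far` children) or variables (no children). -/
def TermP (S : Sig) : PFunctor :=
  ⟨S.Func ⊕ ℕ, fun l => Fin (match l with | Sum.inl f => S.far f | Sum.inr _ => 0)⟩

/-- Possibly infinite terms over the signature `S`. -/
def Term (S : Sig) : Type := (TermP S).M

/-- The term consisting of a single variable `x`. -/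
def Term.var (S : Sig) (x : ℕ) : Term S :=
  PFunctor.M.mk ⟨Sum.inr x, fun i => i.elim0⟩

/-- The variable `x` occurs in the term `t`. -/
inductive Term.Occurs (S : Sig) (x : ℕ) : Term S → Prop
  | root (t : Term S) (h : (PFunctor.M.dest t).1 = Sum.inr x) : Term.Occurs S x t
  | child (t : Term S) (i : (TermP S).B (PFunctor.M.dest t).1)
      (h : Term.Occurs S x ((PFunctor.M.dest t).2 i)) : Term.Occurs S x t

/-- The term `t` is finite (syntactic): all its branches are finite. -/
inductive Term.IsFinite (S : Sig) : Term S → Prop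
  | mk (t : Term S) (h : ∀ i, Term.IsFinite S ((PFunctor.M.dest t).2 i)) : Term.IsFinite S t

/-- The term `t` is ground: no variable occurs in it. -/
def Term.Ground (S : Sig) (t : Term S) : Prop := ∀ x, ¬ Term.Occurs S x t

/-- A substitution: a map from a finite set of variables to terms. -/
structure Subst (S : Sig) where
  toFun : ℕ → Option (Term S)
  finDom : {x | (toFun x).isSome}.Finite

/-- Domain of a substitution. -/
def Subst.dom {S : Sig} (σ : Subst S) : Set ℕ := {x | (σ.toFun x).isSome}

/-- A substitution is ground if all its values are ground terms. -/
def Subst.Ground {S : Sig} (σ : Subst S) : Prop :=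
  ∀ x t, σ.toFun x = some t → Term.Ground S t

/-- `σ ⊑ θ` : `dom σ ⊆ dom θ` and the two substitutions agree on `dom σ`. -/
def Subst.le {S : Sig} (σ θ : Subst S) : Prop :=
  ∀ x t, σ.toFun x = some t → θ.toFun x = some t

/-- One step of (simultaneous) substitution application, as a coalgebra.
The boolean flag records whether we are still in the original term (`true`)
or inside a substituted term (`false`). -/
def substStep (S : Sig) (σ : Subst S) : Term S × Bool → (TermP S).Obj (Term S × Bool) :=
  fun p =>
    match PFunctor.M.dest p.1, p.2 with
    | ⟨Sum.inl f, ch⟩, b => ⟨Sum.inl f, fun i => (ch i, b)⟩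
    | ⟨Sum.inr x, ch⟩, true =>
        match σ.toFun x with
        | some s =>
            match PFunctor.M.dest s with
            | ⟨l, ch'⟩ => ⟨l, fun i => (ch' i, false)⟩
        | none => ⟨Sum.inr x, fun i => (ch i, true)⟩
    | ⟨Sum.inr x, ch⟩, false => ⟨Sum.inr x, fun i => (ch i, false)⟩

/-- Application `tσ` of a substitution to a term. -/
def Term.subst {S : Sig} (t : Term S) (σ : Subst S) : Term S :=
  PFunctor.M.corec (substStep S σ) (t, true)

/-- Atoms: a predicate symbol applied to terms (a possibly infinite tree whose
root is labelled by a predicate symbol). -/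
structure Atom (S : Sig) where
  pred : S.Pred
  args : Fin (S.par pred) → Term S

/-- The variable `x` occurs in the atom `A`. -/
def Atom.Occurs {S : Sig} (x : ℕ) (A : Atom S) : Prop := ∃ i, Term.Occurs S x (A.args i)

/-- Ground atoms. The set of all ground atoms is the complete Herbrand base. -/
def Atom.Ground {S : Sig} (A : Atom S) : Prop := ∀ i, Term.Ground S (A.args i)

/-- Finite (syntactic) atoms. -/
def Atom.IsFinite {S : Sig} (A : Atom S) : Prop := ∀ i, Term.IsFinite S (A.args i)

/-- Application of a substitution to an atom. -/
def Atom.subst {S : Sig} (A : Atom S) (σ : Subst S) : Atom S :=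
  ⟨A.pred, fun i => Term.subst (A.args i) σ⟩

/-- A (definite) clause `head :- body`, made of finite atoms. -/
structure Clause (S : Sig) where
  head : Atom S
  body : List (Atom S)
  finHead : head.IsFinite
  finBody : ∀ B ∈ body, B.IsFinite

/-- Variables occurring in a clause. -/
def clauseVars {S : Sig} (C : Clause S) : Set ℕ :=
  {x | Atom.Occurs x C.head ∨ ∃ B ∈ C.body, Atom.Occurs x B}

/-- `Ground P` : the ground instances of clauses of `P`, viewed as inference rules
(pairs premises/conclusion) on the complete Herbrand base. -/
def GroundInst {S : Sig} (P : Set (Clause S)) : Set (Atom S × List (Atom S)) :=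
  {r | ∃ C ∈ P, ∃ σ : Subst S, σ.Ground ∧
        r.1 = C.head.subst σ ∧ r.2 = C.body.map (fun B => B.subst σ) ∧
        r.1.Ground ∧ ∀ B ∈ r.2, B.Ground}

/-- The (one step) inference operator `T_P` associated to a program. -/
def TP {S : Sig} (P : Set (Clause S)) (I : Set (Atom S)) : Set (Atom S) :=
  {A | ∃ r ∈ GroundInst P, r.1 = A ∧ ∀ B ∈ r.2, B ∈ I}

/-- `I` is a model of `P`. -/
def IsModel {S : Sig} (P : Set (Clause S)) (I : Set (Atom S)) : Prop := TP P I ⊆ I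

/-- `I` is a comodel of `P`. -/
def IsComodel {S : Sig} (P : Set (Clause S)) (I : Set (Atom S)) : Prop := I ⊆ TP P I

/-- `Ind P` : the inductive declarative semantics, i.e. the least model of `P`. -/
def Ind {S : Sig} (P : Set (Clause S)) : Set (Atom S) := ⋂₀ {I | IsModel P I}

/-- `FlexCo (P,coP)` : the declarative semantics of a logic program with coclauses,
i.e. the largest comodel of `P` included in `Ind (P ∪ coP)` (union of all such comodels). -/
def FlexCo {S : Sig} (P coP : Set (Clause S)) : Set (Atom S) :=
  ⋃₀ {I | IsComodel P I ∧ I ⊆ Ind (P ∪ coP)}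

/-- `FlexReg (P,coP)` : the regular declarative semantics, i.e. the union of all
finite comodels of `P` included in `Ind (P ∪ coP)`. -/
def FlexReg {S : Sig} (P coP : Set (Clause S)) : Set (Atom S) :=
  ⋃₀ {I | I.Finite ∧ IsComodel P I ∧ I ⊆ Ind (P ∪ coP)}

/-- An equation `s ≐ t` between terms. -/
abbrev Eqn (S : Sig) := Term S × Term S

/-- Variables occurring in a set of equations. -/
def eqnVars {S : Sig} (E : Set (Eqn S)) : Set ℕ :=
  {x | ∃ e ∈ E, Term.Occurs S x e.1 ∨ Term.Occurs S x e.2}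

/-- `E` is a finite set of equations between finite (syntactic) terms. -/
def EqnSetFin {S : Sig} (E : Set (Eqn S)) : Prop :=
  E.Finite ∧ ∀ e ∈ E, Term.IsFinite S e.1 ∧ Term.IsFinite S e.2

/-- `sol E` : the set of solutions of `E`, i.e. ground substitutions defined on all
variables of `E` that unify all the equations in `E`. -/
def sol {S : Sig} (E : Set (Eqn S)) : Set (Subst S) :=
  {σ | σ.Ground ∧ eqnVars E ⊆ σ.dom ∧ ∀ e ∈ E, e.1.subst σ = e.2.subst σ}

/-- `E` is solvable. -/
def Solvable {S : Sig} (E : Set (Eqn S)) : Prop := (sol E).Nonempty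

/-- `eqs(A,B)` : the equations between the corresponding arguments of two atoms
with the same predicate symbol. -/
def atomEqs {S : Sig} (A B : Atom S) : Set (Eqn S) :=
  {e | ∃ (h : A.pred = B.pred) (i : Fin (S.par A.pred)),
        e = (A.args i, B.args (Fin.cast (congrArg S.par h) i))}

/-- Variables occurring in a set of atoms. -/
def atomsVars {S : Sig} (H : Set (Atom S)) : Set ℕ := {x | ∃ A ∈ H, Atom.Occurs x A}

/-- Variables occurring in a sequence of atoms (a goal). -/
def goalVars {S : Sig} (G : List (Atom S)) : Set ℕ := {x | ∃ A ∈ G, Atom.Occurs x A}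

/-- `ρ` is a renaming of the variables of clause `C` to fresh variables avoiding `avoid`:
it maps (injectively) every variable of `C` to a variable not in `avoid`. -/
def FreshRenamingFor {S : Sig} (ρ : Subst S) (C : Clause S) (avoid : Set ℕ) : Prop :=
  (∀ x t, ρ.toFun x = some t → ∃ y, t = Term.var S y ∧ y ∉ avoid) ∧
  clauseVars C ⊆ ρ.dom ∧
  (∀ x y, ρ.toFun x = ρ.toFun y → (ρ.toFun x).isSome → x = y)

/-- The big-step operational semantics judgment `P;coP ⊢ H : ⟨G | E⟩ ⇒ E'` of
flexible coSLD resolution, inductively defined by the rules (empty), (co-hyp), (step). -/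
inductive OpSem (S : Sig) :
    Set (Clause S) → Set (Clause S) → Set (Atom S) → List (Atom S) →
      Set (Eqn S) → Set (Eqn S) → Prop
  | empty (P coP : Set (Clause S)) (H : Set (Atom S)) (E : Set (Eqn S)) :
      OpSem S P coP H [] E E
  | cohyp {P coP : Set (Clause S)} {H : Set (Atom S)} {G1 G2 : List (Atom S)}
      {A B : Atom S} {E1 E2 E3 : Set (Eqn S)} :
      coP ≠ ∅ → B ∈ H → A.pred = B.pred →
      Solvable (E1 ∪ atomEqs A B) →
      OpSem S (P ∪ coP) ∅ ∅ [A] (E1 ∪ atomEqs A B) E2 →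
      OpSem S P coP H (G1 ++ G2) E2 E3 →
      OpSem S P coP H (G1 ++ A :: G2) E1 E3
  | step {P coP : Set (Clause S)} {H : Set (Atom S)} {G1 G2 : List (Atom S)}
      {A : Atom S} {E1 E2 E3 : Set (Eqn S)} (C : Clause S) (ρ : Subst S) :
      C ∈ P →
      FreshRenamingFor ρ C (eqnVars E1 ∪ atomsVars H ∪ goalVars (G1 ++ A :: G2)) →
      A.pred = C.head.pred →
      Solvable (E1 ∪ atomEqs A (C.head.subst ρ)) →
      OpSem S P coP (H ∪ {A}) (C.body.map (fun B => B.subst ρ))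
        (E1 ∪ atomEqs A (C.head.subst ρ)) E2 →
      OpSem S P coP H (G1 ++ G2) E2 E3 →
      OpSem S P coP H (G1 ++ A :: G2) E1 E3

/-- `Ans(G,E,I)` : the set of answers to the goal `⟨G | E⟩` correct in the
interpretation `I`. -/
def Ans {S : Sig} (G : List (Atom S)) (E : Set (Eqn S)) (I : Set (Atom S)) :
    Set (Subst S) :=
  {σ | σ ∈ sol E ∧ goalVars G ⊆ σ.dom ∧ ∀ A ∈ G, A.subst σ ∈ I}

/-- The inductive interpretation of the inference system `Loop(P,coP)`, whose judgments
`H ⊢ A` pair a ground atom with a set of ground atoms (circular hypotheses);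
rules: (hp) `H ⊢ A` if `A ∈ H` and `A ∈ Ind (P ∪ coP)`;
(rule) from `H∪{A} ⊢ B` for every premise `B` of a ground instance of a clause of `P`
with conclusion `A`, infer `H ⊢ A`. -/
inductive LoopInd {S : Sig} (P coP : Set (Clause S)) : Set (Atom S) → Atom S → Prop
  | hp {H : Set (Atom S)} {A : Atom S} :
      A ∈ H → A ∈ Ind (P ∪ coP) → LoopInd P coP H A
  | rule {H : Set (Atom S)} {A : Atom S} (r : Atom S × List (Atom S)) :
      r ∈ GroundInst P → r.1 = A →
      (∀ B ∈ r.2, LoopInd P coP (H ∪ {A}) B) →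
      LoopInd P coP H A


variable {S : Sig}

theorem fin0_funext {α : Type _} {n : ℕ} (h : n = 0) (f g : Fin n → α) : f = g :=
  funext fun i => absurd i.2 (by omega)

theorem term_var_eq {t : Term S} {x ch} (h : PFunctor.M.dest t = ⟨Sum.inr x, ch⟩) :
    t = Term.var S x := by
  rw [← PFunctor.M.mk_dest t, h]
  unfold Term.var
  have : ch = (fun i => Fin.elim0 i) := fin0_funext rfl _ _
  rw [this]; rfl

theorem dest_subst_fun (σ : Subst S) {t : Term S} {f ch} (h : PFunctor.M.dest t = ⟨Sum.inl f, ch⟩) :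
    PFunctor.M.dest (t.subst σ) = ⟨Sum.inl f, fun i => Term.subst (ch i) σ⟩ := by
  unfold Term.subst
  rw [PFunctor.M.dest_corec]
  simp only [substStep, h]
  rfl
theorem subst_false_id (σ : Subst S) (u : Term S) :
    PFunctor.M.corec (substStep S σ) (u, false) = u := by
  apply PFunctor.M.bisim (fun x y => ∃ v : Term S, x = PFunctor.M.corec (substStep S σ) (v, false) ∧ y = v)
  · rintro x y ⟨v, rfl, rfl⟩
    rcases hd : PFunctor.M.dest y with ⟨l, ch⟩
    cases l with
    | inl f =>
      refine ⟨Sum.inl f, fun i => PFunctor.M.corec (substStep S σ) (ch i, false), ch, ?_, rfl, ?_⟩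
      · rw [PFunctor.M.dest_corec]; simp only [substStep, hd]; rfl
      · intro i; exact ⟨ch i, rfl, rfl⟩
    | inr x =>
      refine ⟨Sum.inr x, fun i => PFunctor.M.corec (substStep S σ) (ch i, false), ch, ?_, rfl, ?_⟩
      · rw [PFunctor.M.dest_corec]; simp only [substStep, hd]; rfl
      · intro i; exact ⟨ch i, rfl, rfl⟩
  · exact ⟨u, rfl, rfl⟩

theorem subst_var_some (σ : Subst S) {t : Term S} {x ch s}
    (h : PFunctor.M.dest t = ⟨Sum.inr x, ch⟩) (hs : σ.toFun x = some s) :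
    t.subst σ = s := by
  have hd : PFunctor.M.dest (t.subst σ) = PFunctor.M.dest s := by
    unfold Term.subst
    rw [PFunctor.M.dest_corec]
    simp only [substStep, h, hs]
    rcases hd' : PFunctor.M.dest s with ⟨l, ch'⟩
    show (⟨l, fun i => PFunctor.M.corec (substStep S σ) (ch' i, false)⟩ : (TermP S).Obj _) = _
    congr 1
    funext i
    exact subst_false_id σ (ch' i)
  rw [← PFunctor.M.mk_dest (t.subst σ), hd]; exact PFunctor.M.mk_dest _

theorem subst_var_none (σ : Subst S) {t : Term S} {x ch}
    (h : PFunctor.M.dest t = ⟨Sum.inr x, ch⟩) (hs : σ.toFun x = none) :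
    t.subst σ = t := by
  have hd : PFunctor.M.dest (t.subst σ) = PFunctor.M.dest t := by
    unfold Term.subst
    rw [PFunctor.M.dest_corec]
    simp only [substStep, h, hs]
    show (⟨Sum.inr x, fun i => PFunctor.M.corec (substStep S σ) (ch i, true)⟩ : (TermP S).Obj _) = ⟨Sum.inr x, ch⟩
    congr 1
    exact fin0_funext rfl _ _
  rw [← PFunctor.M.mk_dest (t.subst σ), hd]; exact PFunctor.M.mk_dest _
theorem occurs_mk_iff {x : ℕ} (l : (TermP S).A) (ch : (TermP S).B l → Term S) :
    Term.Occurs S x (PFunctor.M.mk ⟨l, ch⟩) ↔ l = Sum.inr x ∨ ∃ i, Term.Occurs S x (ch i) := by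
  constructor
  · intro h
    cases h with
    | root t h => exact Or.inl h
    | child t i h => exact Or.inr ⟨i, h⟩
  · rintro (rfl | ⟨i, h⟩)
    · exact Term.Occurs.root _ rfl
    · exact Term.Occurs.child _ i h

theorem isFinite_mk_iff (l : (TermP S).A) (ch : (TermP S).B l → Term S) :
    Term.IsFinite S (PFunctor.M.mk ⟨l, ch⟩) ↔ ∀ i, Term.IsFinite S (ch i) := by
  constructor
  · intro h
    cases h with
    | mk t h => exact h
  · intro h
    exact Term.IsFinite.mk _ h
theorem subst_mk_fun (σ : Subst S) (f : S.Func) (ch) :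
    Term.subst (PFunctor.M.mk ⟨Sum.inl f, ch⟩) σ
      = PFunctor.M.mk ⟨Sum.inl f, fun i => Term.subst (ch i) σ⟩ := by
  rw [← PFunctor.M.mk_dest (Term.subst (PFunctor.M.mk ⟨Sum.inl f, ch⟩) σ),
    dest_subst_fun σ (PFunctor.M.dest_mk _)]

theorem subst_mk_var_some (σ : Subst S) (y : ℕ) (ch) {s} (hs : σ.toFun y = some s) :
    Term.subst (PFunctor.M.mk ⟨Sum.inr y, ch⟩) σ = s :=
  subst_var_some σ (PFunctor.M.dest_mk _) hs

theorem subst_mk_var_none (σ : Subst S) (y : ℕ) (ch) (hs : σ.toFun y = none) :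
    Term.subst (PFunctor.M.mk ⟨Sum.inr y, ch⟩) σ = PFunctor.M.mk ⟨Sum.inr y, ch⟩ :=
  subst_var_none σ (PFunctor.M.dest_mk _) hs

theorem isFinite_ind (motive : Term S → Prop)
    (h : ∀ l ch, (∀ i, Term.IsFinite S (ch i)) → (∀ i, motive (ch i)) →
      motive (PFunctor.M.mk ⟨l, ch⟩)) :
    ∀ t, Term.IsFinite S t → motive t := by
  intro t ht
  induction ht with
  | mk t h' IH =>
    rw [← PFunctor.M.mk_dest t]
    revert h' IH
    generalize PFunctor.M.dest t = d
    obtain ⟨l, ch⟩ := d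
    intro h' IH
    exact h l ch h' IH

theorem occurs_ind (x : ℕ) (motive : Term S → Prop)
    (hroot : ∀ ch, motive (PFunctor.M.mk ⟨Sum.inr x, ch⟩))
    (hchild : ∀ l ch (i : (TermP S).B l), Term.Occurs S x (ch i) → motive (ch i) →
      motive (PFunctor.M.mk ⟨l, ch⟩)) :
    ∀ t, Term.Occurs S x t → motive t := by
  intro t ht
  induction ht with
  | root t h =>
    rw [← PFunctor.M.mk_dest t]
    revert h
    generalize PFunctor.M.dest t = d
    obtain ⟨l, ch⟩ := d
    intro h
    obtain rfl : l = Sum.inr x := h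
    exact hroot ch
  | child t i h IH =>
    rw [← PFunctor.M.mk_dest t]
    revert i h IH
    generalize PFunctor.M.dest t = d
    obtain ⟨l, ch⟩ := d
    intro i h IH
    exact hchild l ch i h IH

theorem ground_mk_iff (l ch) :
    Term.Ground S (PFunctor.M.mk ⟨l, ch⟩) ↔
      (∀ y : ℕ, l ≠ Sum.inr y) ∧ ∀ i, Term.Ground S (ch i) := by
  constructor
  · intro h
    constructor
    · rintro y rfl
      exact h y ((occurs_mk_iff _ _).2 (Or.inl rfl))
    · intro i y hy
      exact h y ((occurs_mk_iff _ _).2 (Or.inr ⟨i, hy⟩))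
  · rintro ⟨h1, h2⟩ y hy
    rcases (occurs_mk_iff _ _).1 hy with h | ⟨i, h⟩
    · exact h1 y h
    · exact h2 i y h

theorem occurs_subst_none {x : ℕ} (σ : Subst S) {t : Term S}
    (h : Term.Occurs S x t) (hs : σ.toFun x = none) :
    Term.Occurs S x (t.subst σ) := by
  refine occurs_ind x (fun t => Term.Occurs S x (t.subst σ)) ?_ ?_ t h
  · intro ch
    rw [subst_mk_var_none σ x ch hs]
    exact Term.Occurs.root _ rfl
  · intro l ch i _ IH
    cases l with
    | inl f =>
      rw [subst_mk_fun]
      exact (occurs_mk_iff _ _).2 (Or.inr ⟨i, IH⟩)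
    | inr y => exact absurd i.isLt (Nat.not_lt_zero _)

theorem ground_subst_id (σ : Subst S) {t : Term S} (h : Term.Ground S t) :
    t.subst σ = t := by
  apply PFunctor.M.bisim (fun a b => (a = Term.subst b σ ∧ Term.Ground S b) ∨ a = b)
  · rintro a b (⟨rfl, hg⟩ | rfl)
    · rcases hd : PFunctor.M.dest b with ⟨l, ch⟩
      have hb : b = PFunctor.M.mk ⟨l, ch⟩ := by rw [← PFunctor.M.mk_dest b, hd]
      rw [hb] at hg
      cases l with
      | inl f =>
        refine ⟨Sum.inl f, fun i => Term.subst (ch i) σ, ch, dest_subst_fun σ hd, rfl, ?_⟩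
        intro i
        exact Or.inl ⟨rfl, ((ground_mk_iff _ _).1 hg).2 i⟩
      | inr y => exact absurd rfl (((ground_mk_iff _ _).1 hg).1 y)
    · rcases hd : PFunctor.M.dest a with ⟨l, ch⟩
      exact ⟨l, ch, ch, rfl, rfl, fun i => Or.inr rfl⟩
  · exact Or.inl ⟨rfl, h⟩
theorem subst_var' (σ : Subst S) (y : ℕ) {s} (hs : σ.toFun y = some s) :
    Term.subst (Term.var S y) σ = s :=
  subst_var_some σ (show PFunctor.M.dest (Term.var S y) = ⟨Sum.inr y, fun i => i.elim0⟩ from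
    PFunctor.M.dest_mk _) hs

theorem subst_congr {σ θ : Subst S} {t : Term S} (hfin : Term.IsFinite S t)
    (hocc : ∀ x, Term.Occurs S x t → σ.toFun x = θ.toFun x) :
    t.subst σ = t.subst θ := by
  refine isFinite_ind
    (fun t => (∀ x, Term.Occurs S x t → σ.toFun x = θ.toFun x) → t.subst σ = t.subst θ)
    ?_ t hfin hocc
  intro l ch _ IH hocc
  cases l with
  | inl f =>
    rw [subst_mk_fun, subst_mk_fun]
    have : (fun i => Term.subst (ch i) σ) = (fun i => Term.subst (ch i) θ) := by
      funext i
      exact IH i (fun x hx => hocc x ((occurs_mk_iff _ _).2 (Or.inr ⟨i, hx⟩)))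
    rw [this]
  | inr y =>
    have hy : σ.toFun y = θ.toFun y := hocc y ((occurs_mk_iff _ _).2 (Or.inl rfl))
    cases hs : σ.toFun y with
    | some s => rw [subst_mk_var_some σ y ch hs, subst_mk_var_some θ y ch (by rw [← hy, hs])]
    | none => rw [subst_mk_var_none σ y ch hs, subst_mk_var_none θ y ch (by rw [← hy, hs])]

theorem subst_comp_rename {ρ θ μ : Subst S} {t : Term S} (hfin : Term.IsFinite S t)
    (hocc : ∀ x, Term.Occurs S x t → ∃ y s, ρ.toFun x = some (Term.var S y) ∧
      θ.toFun y = some s ∧ μ.toFun x = some s) :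
    Term.subst (t.subst ρ) θ = t.subst μ := by
  refine isFinite_ind
    (fun t => (∀ x, Term.Occurs S x t → ∃ y s, ρ.toFun x = some (Term.var S y) ∧
      θ.toFun y = some s ∧ μ.toFun x = some s) → Term.subst (t.subst ρ) θ = t.subst μ)
    ?_ t hfin hocc
  intro l ch _ IH hocc
  cases l with
  | inl f =>
    rw [subst_mk_fun, subst_mk_fun]; refine (subst_mk_fun θ f _).trans ?_
    have : (fun i => Term.subst (Term.subst (ch i) ρ) θ) = (fun i => Term.subst (ch i) μ) := by
      funext i
      exact IH i (fun x hx => hocc x ((occurs_mk_iff _ _).2 (Or.inr ⟨i, hx⟩)))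
    rw [this]
  | inr y =>
    obtain ⟨y', s, h1, h2, h3⟩ := hocc y ((occurs_mk_iff _ _).2 (Or.inl rfl))
    rw [subst_mk_var_some ρ y ch h1, subst_var' θ y' h2, subst_mk_var_some μ y ch h3]

theorem subst_isFinite {σ : Subst S} {t : Term S} (hfin : Term.IsFinite S t)
    (hσ : ∀ x s, σ.toFun x = some s → Term.IsFinite S s) :
    Term.IsFinite S (t.subst σ) := by
  refine isFinite_ind (fun t => Term.IsFinite S (t.subst σ)) ?_ t hfin
  intro l ch hch IH
  cases l with
  | inl f =>
    rw [subst_mk_fun]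
    exact (isFinite_mk_iff _ _).2 IH
  | inr y =>
    cases hs : σ.toFun y with
    | some s => rw [subst_mk_var_some σ y ch hs]; exact hσ y s hs
    | none => rw [subst_mk_var_none σ y ch hs]; exact (isFinite_mk_iff _ _).2 hch

theorem occurs_subst_inv {σ : Subst S} {y : ℕ} {t : Term S} (hfin : Term.IsFinite S t)
    (h : Term.Occurs S y (t.subst σ)) :
    (Term.Occurs S y t ∧ σ.toFun y = none) ∨
      ∃ x s, Term.Occurs S x t ∧ σ.toFun x = some s ∧ Term.Occurs S y s := by
  refine isFinite_ind (fun t => Term.Occurs S y (t.subst σ) →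
    (Term.Occurs S y t ∧ σ.toFun y = none) ∨
      ∃ x s, Term.Occurs S x t ∧ σ.toFun x = some s ∧ Term.Occurs S y s) ?_ t hfin h
  intro l ch _ IH h
  cases l with
  | inl f =>
    rw [subst_mk_fun] at h
    rcases (occurs_mk_iff _ _).1 h with h' | ⟨i, h'⟩
    · exact absurd h' (by simp)
    · rcases IH i h' with ⟨h1, h2⟩ | ⟨x, s, h1, h2, h3⟩
      · exact Or.inl ⟨(occurs_mk_iff _ _).2 (Or.inr ⟨i, h1⟩), h2⟩
      · exact Or.inr ⟨x, s, (occurs_mk_iff _ _).2 (Or.inr ⟨i, h1⟩), h2, h3⟩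
  | inr x =>
    cases hs : σ.toFun x with
    | some s =>
      rw [subst_mk_var_some σ x ch hs] at h
      exact Or.inr ⟨x, s, (occurs_mk_iff _ _).2 (Or.inl rfl), hs, h⟩
    | none =>
      rw [subst_mk_var_none σ x ch hs] at h
      rcases (occurs_mk_iff _ _).1 h with h' | ⟨i, _⟩
      · obtain rfl : x = y := by injection h'
        exact Or.inl ⟨(occurs_mk_iff _ _).2 (Or.inl rfl), hs⟩
      · exact absurd i.isLt (Nat.not_lt_zero _)

theorem vars_finite {t : Term S} (hfin : Term.IsFinite S t) :
    {x | Term.Occurs S x t}.Finite := by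
  refine isFinite_ind (fun t => {x | Term.Occurs S x t}.Finite) ?_ t hfin
  intro l ch _ IH
  cases l with
  | inl f =>
    haveI : Finite ((TermP S).B (Sum.inl f)) := inferInstanceAs (Finite (Fin (S.far f)))
    apply Set.Finite.subset (Set.finite_iUnion (fun i => IH i))
    intro x hx
    rcases (occurs_mk_iff _ _).1 hx with h | ⟨i, h⟩
    · exact absurd h (by simp)
    · exact Set.mem_iUnion.2 ⟨i, h⟩
  | inr y =>
    apply Set.Finite.subset (Set.finite_singleton y)
    intro x hx
    rcases (occurs_mk_iff _ _).1 hx with h | ⟨i, _⟩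
    · obtain rfl : y = x := by injection h
      exact rfl
    · exact absurd i.isLt (Nat.not_lt_zero _)
theorem Atom.subst_pred (A : Atom S) (σ : Subst S) : (A.subst σ).pred = A.pred := rfl

theorem atom_subst_congr {σ θ : Subst S} {A : Atom S} (hfin : A.IsFinite)
    (hocc : ∀ x, Atom.Occurs x A → σ.toFun x = θ.toFun x) :
    A.subst σ = A.subst θ := by
  unfold Atom.subst
  congr 1
  funext i
  exact subst_congr (hfin i) (fun x hx => hocc x ⟨i, hx⟩)

theorem atomVars_finite {A : Atom S} (hfin : A.IsFinite) :
    {x | Atom.Occurs x A}.Finite := by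
  apply Set.Finite.subset (Set.finite_iUnion (fun i => vars_finite (hfin i)))
  rintro x ⟨i, h⟩
  exact Set.mem_iUnion.2 ⟨i, h⟩

theorem atomsVars_finite {H : Set (Atom S)} (hH : H.Finite) (hsyn : ∀ A ∈ H, A.IsFinite) :
    (atomsVars H).Finite := by
  apply Set.Finite.subset (Set.Finite.biUnion hH (fun A hA => atomVars_finite (hsyn A hA)))
  rintro x ⟨A, hA, h⟩
  exact Set.mem_biUnion hA h

theorem goalVars_finite {G : List (Atom S)} (hG : ∀ A ∈ G, A.IsFinite) :
    (goalVars G).Finite := by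
  apply Set.Finite.subset (Set.Finite.biUnion G.finite_toSet (fun A hA => atomVars_finite (hG A hA)))
  rintro x ⟨A, hA, h⟩
  exact Set.mem_biUnion hA h

theorem eqnVars_finite {E : Set (Eqn S)} (hE : EqnSetFin E) : (eqnVars E).Finite := by
  apply Set.Finite.subset (Set.Finite.biUnion hE.1
    (fun e he => Set.Finite.union (vars_finite (hE.2 e he).1) (vars_finite (hE.2 e he).2)))
  rintro x ⟨e, he, h | h⟩
  · exact Set.mem_biUnion he (Or.inl h)
  · exact Set.mem_biUnion he (Or.inr h)

/-- Depth-bounded derivability in the pure inductive semantics. -/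
inductive DerivN (Q : Set (Clause S)) : ℕ → Atom S → Prop
  | rule {n : ℕ} {A : Atom S} (r : Atom S × List (Atom S)) :
      r ∈ GroundInst Q → r.1 = A → (∀ B ∈ r.2, DerivN Q n B) → DerivN Q (n + 1) A

/-- Depth-bounded version of `LoopInd`, with `hp` nodes only when `coP ≠ ∅`. -/
inductive LoopIndN (P coP : Set (Clause S)) : ℕ → Set (Atom S) → Atom S → Prop
  | hp {n : ℕ} {H : Set (Atom S)} {A : Atom S} :
      coP ≠ ∅ → A ∈ H → A ∈ Ind (P ∪ coP) → LoopIndN P coP n H A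
  | rule {n : ℕ} {H : Set (Atom S)} {A : Atom S} (r : Atom S × List (Atom S)) :
      r ∈ GroundInst P → r.1 = A → (∀ B ∈ r.2, LoopIndN P coP n (H ∪ {A}) B) →
      LoopIndN P coP (n + 1) H A

theorem derivN_mono {Q : Set (Clause S)} {n m : ℕ} {A : Atom S}
    (h : DerivN Q n A) (hnm : n ≤ m) : DerivN Q m A := by
  induction h generalizing m with
  | rule r h1 h2 h3 IH =>
    match m, hnm with
    | m' + 1, hnm => exact DerivN.rule r h1 h2 (fun B hB => IH B hB (by omega))

theorem loopIndN_mono {P coP : Set (Clause S)} {n m : ℕ} {H : Set (Atom S)} {A : Atom S}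
    (h : LoopIndN P coP n H A) (hnm : n ≤ m) : LoopIndN P coP m H A := by
  induction h generalizing m with
  | hp h1 h2 h3 => exact LoopIndN.hp h1 h2 h3
  | rule r h1 h2 h3 IH =>
    match m, hnm with
    | m' + 1, hnm => exact LoopIndN.rule r h1 h2 (fun B hB => IH B hB (by omega : _ ≤ m'))
theorem list_bound {Q : ℕ → Atom S → Prop}
    (mono : ∀ {n m B}, Q n B → n ≤ m → Q m B)
    {l : List (Atom S)} (h : ∀ B ∈ l, ∃ n, Q n B) : ∃ n, ∀ B ∈ l, Q n B := by
  induction l with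
  | nil => exact ⟨0, by simp⟩
  | cons B l IH =>
    obtain ⟨n1, hn1⟩ := h B (List.mem_cons_self)
    obtain ⟨n2, hn2⟩ := IH (fun B' hB' => h B' (List.mem_cons_of_mem _ hB'))
    refine ⟨max n1 n2, ?_⟩
    intro B' hB'
    rcases List.mem_cons.1 hB' with rfl | hB'
    · exact mono hn1 (le_max_left _ _)
    · exact mono (hn2 B' hB') (le_max_right _ _)

theorem ind_derivN {Q : Set (Clause S)} {A : Atom S} (h : A ∈ Ind Q) :
    ∃ n, DerivN Q n A := by
  have hm : IsModel Q {A | ∃ n, DerivN Q n A} := by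
    rintro A ⟨r, hr, rfl, hB⟩
    obtain ⟨n, hn⟩ := list_bound (Q := fun n B => DerivN Q n B) (fun h hnm => derivN_mono h hnm) hB
    exact ⟨n + 1, DerivN.rule r hr rfl hn⟩
  exact h _ hm

theorem derivN_loopIndN {P coP : Set (Clause S)} {n : ℕ} {A : Atom S}
    (h : DerivN P n A) : ∀ H, LoopIndN P coP n H A := by
  induction h with
  | rule r h1 h2 h3 IH =>
    intro H
    exact LoopIndN.rule r h1 h2 (fun B hB => IH B hB _)

theorem loopInd_loopIndN {P coP : Set (Clause S)} {H : Set (Atom S)} {A : Atom S}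
    (h : LoopInd P coP H A) : ∃ n, LoopIndN P coP n H A := by
  induction h with
  | hp h1 h2 =>
    by_cases hc : coP = ∅
    · subst hc
      rw [Set.union_empty] at h2
      obtain ⟨n, hn⟩ := ind_derivN h2
      exact ⟨n, derivN_loopIndN hn _⟩
    · exact ⟨0, LoopIndN.hp hc h1 h2⟩
  | rule r h1 h2 h3 IH =>
    obtain ⟨n, hn⟩ := list_bound (Q := fun n B => LoopIndN P coP n _ B) (fun h hnm => loopIndN_mono h hnm) IH
    exact ⟨n + 1, LoopIndN.rule r h1 h2 hn⟩
theorem var_isFinite (y : ℕ) : Term.IsFinite S (Term.var S y) :=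
  (isFinite_mk_iff _ _).2 (fun i => absurd i.isLt (Nat.not_lt_zero _))

theorem var_inj {y y' : ℕ} (h : Term.var S y = Term.var S y') : y = y' := by
  have := congrArg Sigma.fst (PFunctor.M.mk_inj h)
  injection this

theorem Subst.le_refl (σ : Subst S) : σ.le σ := fun _ _ h => h

theorem Subst.le_trans {σ θ μ : Subst S} (h1 : σ.le θ) (h2 : θ.le μ) : σ.le μ :=
  fun x t h => h2 x t (h1 x t h)

theorem Subst.dom_mono {σ θ : Subst S} (h : σ.le θ) : σ.dom ⊆ θ.dom := by
  intro x hx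
  obtain ⟨t, ht⟩ := Option.isSome_iff_exists.1 hx
  exact Option.isSome_iff_exists.2 ⟨t, h x t ht⟩

theorem le_agree {σ θ : Subst S} (h : σ.le θ) {x : ℕ} (hx : x ∈ σ.dom) :
    σ.toFun x = θ.toFun x := by
  obtain ⟨t, ht⟩ := Option.isSome_iff_exists.1 hx
  rw [ht, h x t ht]

theorem subst_le_agree_term {σ θ : Subst S} (h : σ.le θ) {t : Term S}
    (hfin : Term.IsFinite S t) (hdom : ∀ x, Term.Occurs S x t → x ∈ σ.dom) :
    t.subst θ = t.subst σ :=
  subst_congr hfin (fun x hx => (le_agree h (hdom x hx)).symm)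

theorem subst_le_agree_atom {σ θ : Subst S} (h : σ.le θ) {A : Atom S}
    (hfin : A.IsFinite) (hdom : ∀ x, Atom.Occurs x A → x ∈ σ.dom) :
    A.subst θ = A.subst σ :=
  atom_subst_congr hfin (fun x hx => (le_agree h (hdom x hx)).symm)

theorem sol_le {σ θ : Subst S} {E : Set (Eqn S)} (hE : EqnSetFin E)
    (hσ : σ ∈ sol E) (hle : σ.le θ) (hg : θ.Ground) : θ ∈ sol E := by
  obtain ⟨hg0, hd, hsol⟩ := hσ
  refine ⟨hg, fun x hx => Subst.dom_mono hle (hd hx), fun e he => ?_⟩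
  have hdom1 : ∀ x, Term.Occurs S x e.1 → x ∈ σ.dom := fun x hx => hd ⟨e, he, Or.inl hx⟩
  have hdom2 : ∀ x, Term.Occurs S x e.2 → x ∈ σ.dom := fun x hx => hd ⟨e, he, Or.inr hx⟩
  rw [subst_le_agree_term hle (hE.2 e he).1 hdom1, subst_le_agree_term hle (hE.2 e he).2 hdom2]
  exact hsol e he

theorem clauseVars_finite (C : Clause S) : (clauseVars C).Finite := by
  have h1 := atomVars_finite C.finHead
  have h2 := Set.Finite.biUnion C.body.finite_toSet (fun B hB => atomVars_finite (C.finBody B hB))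
  apply Set.Finite.subset (h1.union h2)
  rintro x (h | ⟨B, hB, h⟩)
  · exact Or.inl h
  · exact Or.inr (Set.mem_biUnion hB h)

open Classical in
/-- Existence of a fresh renaming for a clause, avoiding a finite set of variables. -/
theorem fresh_renaming_exists (C : Clause S) (V : Set ℕ) (hV : V.Finite) :
    ∃ (ρ : Subst S) (f : ℕ → ℕ), Function.Injective f ∧ (∀ x, f x ∉ V) ∧
      (∀ x, ρ.toFun x = if x ∈ clauseVars C then some (Term.var S (f x)) else none) := by
  obtain ⟨N, hN⟩ : ∃ N, ∀ v ∈ V, v < N := by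
    rcases Set.Finite.bddAbove hV with ⟨b, hb⟩
    exact ⟨b + 1, fun v hv => Nat.lt_succ_of_le (hb hv)⟩
  refine ⟨⟨fun x => if x ∈ clauseVars C then some (Term.var S (N + x)) else none, ?_⟩,
    fun x => N + x, fun a b h => Nat.add_left_cancel h, fun x hx => by have := hN _ hx; simp at this, fun x => rfl⟩
  apply Set.Finite.subset (clauseVars_finite C)
  intro x hx
  simp only [Set.mem_setOf_eq] at hx
  by_contra hc
  rw [if_neg hc] at hx
  simp at hx
theorem occurs_var_eq {y x : ℕ} (h : Term.Occurs S y (Term.var S x)) : y = x := by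
  rcases (occurs_mk_iff (x := y) (Sum.inr x) (fun i => i.elim0)).1 h with h' | ⟨i, _⟩
  · injection h' with h'; exact h'.symm
  · exact absurd i.isLt (Nat.not_lt_zero _)

theorem atom_eq_args {A B : Atom S} (h : A = B) (i : Fin (S.par A.pred)) :
    A.args i = B.args (Fin.cast (congrArg S.par (congrArg Atom.pred h)) i) := by
  subst h; rfl

theorem atomEqs_finite (A B : Atom S) : (atomEqs A B).Finite := by
  by_cases h : A.pred = B.pred
  · apply Set.Finite.subset
      (Set.finite_range (fun i : Fin (S.par A.pred) =>
        ((A.args i, B.args (Fin.cast (congrArg S.par h) i)) : Eqn S)))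
    rintro e ⟨h', i, rfl⟩
    exact ⟨i, rfl⟩
  · apply Set.Finite.subset (Set.finite_empty)
    rintro e ⟨h', _, _⟩
    exact absurd h' h

theorem atomEqs_syn {A B : Atom S} (hA : A.IsFinite) (hB : B.IsFinite) :
    ∀ e ∈ atomEqs A B, Term.IsFinite S e.1 ∧ Term.IsFinite S e.2 := by
  rintro e ⟨h, i, rfl⟩
  exact ⟨hA i, hB _⟩

open Classical in
theorem step_core (C : Clause S) (σ τ : Subst S) (A : Atom S) (E : Set (Eqn S))
    (H : Set (Atom S)) (G : List (Atom S))
    (hHfin : H.Finite) (hHsyn : ∀ B ∈ H, B.IsFinite)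
    (hGfin : ∀ B ∈ G, Atom.IsFinite B)
    (hAfin : A.IsFinite) (hE : EqnSetFin E)
    (hσ : σ ∈ sol E)
    (hdomA : ∀ x, Atom.Occurs x A → x ∈ σ.dom)
    (hτg : τ.Ground)
    (hhead : C.head.subst τ = A.subst σ)
    (hheadg : Atom.Ground (C.head.subst τ))
    (hbodyg : ∀ B ∈ C.body, Atom.Ground (B.subst τ)) :
    ∃ (ρ θ : Subst S),
      FreshRenamingFor ρ C (eqnVars E ∪ atomsVars H ∪ goalVars G) ∧
      A.pred = (C.head.subst ρ).pred ∧
      σ.le θ ∧ θ.Ground ∧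
      EqnSetFin (E ∪ atomEqs A (C.head.subst ρ)) ∧
      θ ∈ sol (E ∪ atomEqs A (C.head.subst ρ)) ∧
      (∀ B ∈ C.body, Atom.IsFinite (B.subst ρ)) ∧
      (∀ B ∈ C.body, ∀ x, Atom.Occurs x (B.subst ρ) → x ∈ θ.dom) ∧
      (∀ B ∈ C.body, Atom.subst (B.subst ρ) θ = B.subst τ) := by
  classical
  -- the avoid set
  set V0 : Set ℕ := eqnVars E ∪ atomsVars H ∪ goalVars G with hV0
  have hV0fin : V0.Finite :=
    ((eqnVars_finite hE).union (atomsVars_finite hHfin hHsyn)).union (goalVars_finite hGfin)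
  have hdomfin : σ.dom.Finite := σ.finDom
  obtain ⟨ρ, f, hfinj, hfV, hρ⟩ := fresh_renaming_exists C (V0 ∪ σ.dom) (hV0fin.union hdomfin)
  -- clause variables are in the domain of τ
  have hcv_dom : ∀ x ∈ clauseVars C, (τ.toFun x).isSome := by
    intro x hx
    by_contra hc
    have hnone : τ.toFun x = none := Option.not_isSome_iff_eq_none.1 hc
    rcases hx with ⟨i, hocc⟩ | ⟨B, hB, i, hocc⟩
    · exact hheadg i x (occurs_subst_none τ hocc hnone)
    · exact hbodyg B hB i x (occurs_subst_none τ hocc hnone)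
  -- the extension θ of σ
  let g : ℕ → Option (Term S) := fun z =>
    if hz : ∃ y, y ∈ clauseVars C ∧ f y = z then τ.toFun hz.choose else none
  have hgdom : {z | (g z).isSome} ⊆ f '' clauseVars C := by
    intro z hz
    simp only [Set.mem_setOf_eq, g] at hz
    by_contra hc
    rw [dif_neg] at hz
    · simp at hz
    · rintro ⟨y, hy, rfl⟩
      exact hc ⟨y, hy, rfl⟩
  have hgf : ∀ y ∈ clauseVars C, g (f y) = τ.toFun y := by
    intro y hy
    have hz : ∃ y', y' ∈ clauseVars C ∧ f y' = f y := ⟨y, hy, rfl⟩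
    have := hz.choose_spec
    have hyy : hz.choose = y := hfinj this.2
    simp only [g, dif_pos hz, hyy]
  let θ : Subst S := ⟨fun z => match σ.toFun z with | some t => some t | none => g z, by
    apply Set.Finite.subset (hdomfin.union (((clauseVars_finite C).image f)))
    intro z hz
    simp only [Set.mem_setOf_eq] at hz
    cases hs : σ.toFun z with
    | some t => exact Or.inl (Option.isSome_iff_exists.2 ⟨t, hs⟩)
    | none => rw [hs] at hz; exact Or.inr (hgdom hz)⟩
  have hle : σ.le θ := by
    intro x t ht
    show (match σ.toFun x with | some t => some t | none => g x) = some t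
    rw [ht]
  have hθnone : ∀ z, σ.toFun z = none → θ.toFun z = g z := by
    intro z hz
    show (match σ.toFun z with | some t => some t | none => g z) = g z
    rw [hz]
  have hfσ : ∀ y, σ.toFun (f y) = none := by
    intro y
    have := hfV y
    rw [Set.mem_union] at this
    push_neg at this
    exact Option.not_isSome_iff_eq_none.1 this.2
  have hθf : ∀ y ∈ clauseVars C, θ.toFun (f y) = τ.toFun y := by
    intro y hy
    rw [hθnone (f y) (hfσ y), hgf y hy]
  have hθg : θ.Ground := by
    intro x t ht
    have ht' : (match σ.toFun x with | some t => some t | none => g x) = some t := ht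
    cases hs : σ.toFun x with
    | some s => rw [hs] at ht'; exact hσ.1 x t (by rw [hs]; exact ht')
    | none =>
      rw [hs] at ht'
      simp only [g] at ht'
      split at ht'
      · exact hτg _ t ht'
      · exact absurd ht' (by simp)
  -- main composition fact
  have hcomp : ∀ x ∈ clauseVars C, ∃ y s, ρ.toFun x = some (Term.var S y) ∧
      θ.toFun y = some s ∧ τ.toFun x = some s := by
    intro x hx
    obtain ⟨s, hs⟩ := Option.isSome_iff_exists.1 (hcv_dom x hx)
    exact ⟨f x, s, by rw [hρ x, if_pos hx], by rw [hθf x hx, hs], hs⟩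
  have hfresh : FreshRenamingFor ρ C V0 := by
    refine ⟨?_, ?_, ?_⟩
    · intro x t ht
      rw [hρ x] at ht
      split at ht
      · cases ht
        exact ⟨f x, rfl, fun hc => hfV x (Or.inl hc)⟩
      · exact absurd ht (by simp)
    · intro x hx
      show (ρ.toFun x).isSome
      rw [hρ x, if_pos hx]
      rfl
    · intro x y hxy hs
      rw [hρ x] at hxy hs
      rw [hρ y] at hxy
      split at hs
      · rw [if_pos ‹x ∈ clauseVars C›] at hxy
        split at hxy
        · injection hxy with hxy
          exact hfinj (var_inj hxy)
        · exact absurd hxy (by simp)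
      · exact absurd hs (by simp)
  have hpred : A.pred = (C.head.subst ρ).pred := (congrArg Atom.pred hhead).symm
  -- the new equations are between finite atoms
  have hheadρfin : (C.head.subst ρ).IsFinite := by
    intro i
    apply subst_isFinite (C.finHead i)
    intro x s hs
    rw [hρ x] at hs
    split at hs
    · cases hs; exact var_isFinite _
    · exact absurd hs (by simp)
  have hEfin' : EqnSetFin (E ∪ atomEqs A (C.head.subst ρ)) := by
    constructor
    · exact hE.1.union (atomEqs_finite _ _)
    · rintro e (he | he)
      · exact hE.2 e he
      · exact atomEqs_syn hAfin hheadρfin e he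
  -- θ covers the variables of atoms substituted by ρ
  have hρvars : ∀ (B : Atom S), B.IsFinite → (∀ x, Atom.Occurs x B → x ∈ clauseVars C) →
      ∀ x, Atom.Occurs x (B.subst ρ) → x ∈ θ.dom := by
    rintro B hBfin hBcv x ⟨i, hocc⟩
    rcases occurs_subst_inv (hBfin i) hocc with ⟨h1, h2⟩ | ⟨y, s, h1, h2, h3⟩
    · have := hBcv x ⟨i, h1⟩
      have := hcv_dom x this
      rw [hρ x, if_pos (hBcv x ⟨i, h1⟩)] at h2
      exact absurd h2 (by simp)
    · have hycv : y ∈ clauseVars C := by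
        by_contra hc
        rw [hρ y, if_neg hc] at h2
        exact absurd h2 (by simp)
      rw [hρ y, if_pos hycv] at h2
      injection h2 with h2
      subst h2
      obtain rfl : x = f y := occurs_var_eq h3
      obtain ⟨s', hs'⟩ := Option.isSome_iff_exists.1 (hcv_dom y hycv)
      show (θ.toFun (f y)).isSome
      rw [hθf y hycv, hs']
      rfl
  -- θ solves the new equations
  have hθsol : θ ∈ sol (E ∪ atomEqs A (C.head.subst ρ)) := by
    refine ⟨hθg, ?_, ?_⟩
    · rintro x ⟨e, he, hocc⟩
      rcases he with he | he
      · exact Subst.dom_mono hle (hσ.2.1 ⟨e, he, hocc⟩)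
      · obtain ⟨hpr, i, rfl⟩ := he
        rcases hocc with hocc | hocc
        · exact Subst.dom_mono hle (hdomA x ⟨i, hocc⟩)
        · have : Atom.Occurs x (C.head.subst ρ) := ⟨_, hocc⟩
          exact hρvars C.head C.finHead (fun x hx => Or.inl hx) x this
    · rintro e (he | he)
      · have h1 : ∀ x, Term.Occurs S x e.1 → x ∈ σ.dom := fun x hx => hσ.2.1 ⟨e, he, Or.inl hx⟩
        have h2 : ∀ x, Term.Occurs S x e.2 → x ∈ σ.dom := fun x hx => hσ.2.1 ⟨e, he, Or.inr hx⟩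
        rw [subst_le_agree_term hle (hE.2 e he).1 h1, subst_le_agree_term hle (hE.2 e he).2 h2]
        exact hσ.2.2 e he
      · obtain ⟨hpr, i, rfl⟩ := he
        show Term.subst (A.args i) θ = Term.subst ((C.head.subst ρ).args _) θ
        have hL : Term.subst (A.args i) θ = Term.subst (A.args i) σ :=
          subst_le_agree_term hle (hAfin i) (fun x hx => hdomA x ⟨i, hx⟩)
        set j := Fin.cast (congrArg S.par hpr) i with hj
        have hR : Term.subst ((C.head.subst ρ).args j) θ = Term.subst (C.head.args j) τ := by
          show Term.subst (Term.subst (C.head.args j) ρ) θ = _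
          apply subst_comp_rename (C.finHead j)
          intro x hx
          exact hcomp x (Or.inl ⟨j, hx⟩)
        rw [hL, hR]
        have := atom_eq_args hhead j
        have hcc : Fin.cast (congrArg S.par (congrArg Atom.pred hhead)) j = i := by
          apply Fin.ext
          rfl
        rw [hcc] at this
        exact this.symm
  refine ⟨ρ, θ, hfresh, hpred, hle, hθg, hEfin', hθsol, ?_, ?_, ?_⟩
  · intro B hB i
    apply subst_isFinite (C.finBody B hB i)
    intro x s hs
    rw [hρ x] at hs
    split at hs
    · cases hs; exact var_isFinite _
    · exact absurd hs (by simp)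
  · intro B hB
    exact hρvars B (C.finBody B hB) (fun x hx => Or.inr ⟨B, hB, hx⟩)
  · intro B hB
    unfold Atom.subst
    congr 1
    funext i
    apply subst_comp_rename (C.finBody B hB i)
    intro x hx
    exact hcomp x (Or.inr ⟨B, hB, ⟨i, hx⟩⟩)
/-- The statement of completeness, at depth bound `n` and goal `G`. -/
def St (P coP : Set (Clause S)) (n : ℕ) (G : List (Atom S)) : Prop :=
  ∀ (H : Set (Atom S)) (E : Set (Eqn S)) (σ : Subst S),
    H.Finite → (∀ B ∈ H, B.IsFinite) → (∀ A ∈ G, A.IsFinite) → EqnSetFin E →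
    σ ∈ sol E → atomsVars H ⊆ σ.dom → goalVars G ⊆ σ.dom →
    (∀ A ∈ G, LoopIndN P coP n ((fun B => B.subst σ) '' H) (A.subst σ)) →
    ∃ E' θ, EqnSetFin E' ∧ θ ∈ sol E' ∧ OpSem S P coP H G E E' ∧ σ.le θ

theorem image_subst_eq {σ θ : Subst S} {H : Set (Atom S)} (hle : σ.le θ)
    (hHsyn : ∀ B ∈ H, B.IsFinite) (hdomH : atomsVars H ⊆ σ.dom) :
    (fun B => B.subst θ) '' H = (fun B => B.subst σ) '' H := by
  apply Set.image_congr
  intro B hB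
  exact subst_le_agree_atom hle (hHsyn B hB) (fun x hx => hdomH ⟨B, hB, hx⟩)

theorem St_nil (P coP : Set (Clause S)) (n : ℕ) : St (S := S) P coP n [] := by
  intro H E σ _ _ _ hE hσ _ _ _
  exact ⟨E, σ, hE, hσ, OpSem.empty P coP H E, Subst.le_refl σ⟩

theorem St_rule_case (P coP : Set (Clause S)) (n' : ℕ) (A : Atom S) (G' : List (Atom S))
    (H : Set (Atom S)) (E : Set (Eqn S)) (σ : Subst S)
    (hHfin : H.Finite) (hHsyn : ∀ B ∈ H, B.IsFinite)
    (hGfin : ∀ B ∈ A :: G', B.IsFinite) (hE : EqnSetFin E)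
    (hσ : σ ∈ sol E) (hdomH : atomsVars H ⊆ σ.dom) (hdomG : goalVars (A :: G') ⊆ σ.dom)
    (r : Atom S × List (Atom S)) (hr : r ∈ GroundInst P) (hr1 : r.1 = A.subst σ)
    (hsub : ∀ B ∈ r.2, LoopIndN P coP n' ((fun B => B.subst σ) '' H ∪ {A.subst σ}) B)
    (hG'loop : ∀ A' ∈ G', LoopIndN P coP (n' + 1) ((fun B => B.subst σ) '' H) (A'.subst σ))
    (IHn' : ∀ G, St P coP n' G)
    (IHG : St P coP (n' + 1) G') :
    ∃ E' θ, EqnSetFin E' ∧ θ ∈ sol E' ∧ OpSem S P coP H (A :: G') E E' ∧ σ.le θ := by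
  obtain ⟨C, hC, τ, hτg, h1, h2, hg1, hg2⟩ := hr
  have hhead : C.head.subst τ = A.subst σ := by rw [← h1, hr1]
  have hheadg : Atom.Ground (C.head.subst τ) := by rw [← h1]; exact hg1
  have hbodyg : ∀ B ∈ C.body, Atom.Ground (B.subst τ) := by
    intro B hB
    exact hg2 _ (by rw [h2]; exact List.mem_map_of_mem hB)
  have hAfin : A.IsFinite := hGfin A (List.mem_cons_self)
  have hdomA : ∀ x, Atom.Occurs x A → x ∈ σ.dom :=
    fun x hx => hdomG ⟨A, List.mem_cons_self, hx⟩
  obtain ⟨ρ, θ, hfresh, hpred, hle, hθg, hEfin', hθsol, hbodyfin, hbodyvars, hbodycomp⟩ :=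
    step_core C σ τ A E H (A :: G') hHfin hHsyn hGfin hAfin hE hσ hdomA hτg hhead hheadg hbodyg
  have himg : (fun B => B.subst θ) '' (H ∪ {A}) = (fun B => B.subst σ) '' H ∪ {A.subst σ} := by
    rw [Set.image_union, Set.image_singleton, image_subst_eq hle hHsyn hdomH,
      subst_le_agree_atom hle hAfin hdomA]
  -- recursive call on the body of the clause
  obtain ⟨E2, θ2, hE2fin, hθ2sol, hOp1, hle2⟩ :=
    IHn' (C.body.map (fun B => B.subst ρ)) (H ∪ {A}) (E ∪ atomEqs A (C.head.subst ρ)) θ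
      (hHfin.union (Set.finite_singleton A))
      (by rintro B (hB | hB)
          · exact hHsyn B hB
          · rw [hB]; exact hAfin)
      (by rintro B hB
          obtain ⟨B', hB', rfl⟩ := List.mem_map.1 hB
          exact hbodyfin B' hB')
      hEfin' hθsol
      (by rintro x ⟨B, hB | hB, hx⟩
          · exact Subst.dom_mono hle (hdomH ⟨B, hB, hx⟩)
          · rw [hB] at hx; exact Subst.dom_mono hle (hdomA x hx))
      (by rintro x ⟨A', hA', hx⟩
          obtain ⟨B', hB', rfl⟩ := List.mem_map.1 hA'
          exact hbodyvars B' hB' x hx)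
      (by intro B hB
          obtain ⟨B', hB', rfl⟩ := List.mem_map.1 hB
          rw [himg, hbodycomp B' hB']
          exact hsub _ (by rw [h2]; exact List.mem_map_of_mem hB'))
  -- recursive call on the rest of the goal
  have hleσθ2 : σ.le θ2 := Subst.le_trans hle hle2
  obtain ⟨E3, θ3, hE3fin, hθ3sol, hOp2, hle3⟩ :=
    IHG H E2 θ2 hHfin hHsyn (fun B hB => hGfin B (List.mem_cons_of_mem _ hB)) hE2fin hθ2sol
      (fun x hx => Subst.dom_mono hleσθ2 (hdomH hx))
      (fun x hx => Subst.dom_mono hleσθ2 (hdomG (by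
        obtain ⟨A', hA', hocc⟩ := hx
        exact ⟨A', List.mem_cons_of_mem _ hA', hocc⟩)))
      (by intro A' hA'
          rw [image_subst_eq hleσθ2 hHsyn hdomH,
            subst_le_agree_atom hleσθ2 (hGfin A' (List.mem_cons_of_mem _ hA'))
              (fun x hx => hdomG ⟨A', List.mem_cons_of_mem _ hA', hx⟩)]
          exact hG'loop A' hA')
  refine ⟨E3, θ3, hE3fin, hθ3sol, ?_, Subst.le_trans hleσθ2 hle3⟩
  exact OpSem.step (G1 := []) (G2 := G') C ρ hC hfresh hpred ⟨θ, hθsol⟩ hOp1 hOp2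

theorem St_cohyp_case (P coP : Set (Clause S)) (n : ℕ) (A : Atom S) (G' : List (Atom S))
    (H : Set (Atom S)) (E : Set (Eqn S)) (σ : Subst S)
    (hHfin : H.Finite) (hHsyn : ∀ B ∈ H, B.IsFinite)
    (hGfin : ∀ B ∈ A :: G', B.IsFinite) (hE : EqnSetFin E)
    (hσ : σ ∈ sol E) (hdomH : atomsVars H ⊆ σ.dom) (hdomG : goalVars (A :: G') ⊆ σ.dom)
    (hcoP : coP ≠ ∅) (B : Atom S) (hB : B ∈ H) (hBA : B.subst σ = A.subst σ)
    (hind : A.subst σ ∈ Ind (P ∪ coP))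
    (hG'loop : ∀ A' ∈ G', LoopIndN P coP n ((fun B => B.subst σ) '' H) (A'.subst σ))
    (pure : ∀ m G, St (P ∪ coP) ∅ m G)
    (IHG : St P coP n G') :
    ∃ E' θ, EqnSetFin E' ∧ θ ∈ sol E' ∧ OpSem S P coP H (A :: G') E E' ∧ σ.le θ := by
  have hAfin : A.IsFinite := hGfin A (List.mem_cons_self)
  have hdomA : ∀ x, Atom.Occurs x A → x ∈ σ.dom :=
    fun x hx => hdomG ⟨A, List.mem_cons_self, hx⟩
  have hpred : A.pred = B.pred := (congrArg Atom.pred hBA).symm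
  have hE1fin : EqnSetFin (E ∪ atomEqs A B) := by
    constructor
    · exact hE.1.union (atomEqs_finite _ _)
    · rintro e (he | he)
      · exact hE.2 e he
      · exact atomEqs_syn hAfin (hHsyn B hB) e he
  have hσ1 : σ ∈ sol (E ∪ atomEqs A B) := by
    refine ⟨hσ.1, ?_, ?_⟩
    · rintro x ⟨e, he | he, hocc⟩
      · exact hσ.2.1 ⟨e, he, hocc⟩
      · obtain ⟨hpr, i, rfl⟩ := he
        rcases hocc with hocc | hocc
        · exact hdomA x ⟨i, hocc⟩
        · exact hdomH ⟨B, hB, ⟨_, hocc⟩⟩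
    · rintro e (he | he)
      · exact hσ.2.2 e he
      · obtain ⟨hpr, i, rfl⟩ := he
        show Term.subst (A.args i) σ = Term.subst (B.args _) σ
        have := atom_eq_args hBA.symm i
        have hcc : Fin.cast (congrArg S.par (congrArg Atom.pred hBA.symm)) i
            = Fin.cast (congrArg S.par hpr) i := by
          apply Fin.ext
          rfl
        rw [hcc] at this
        exact this
  obtain ⟨m, hm⟩ := ind_derivN hind
  obtain ⟨E2, θ2, hE2fin, hθ2sol, hOp1, hle2⟩ :=
    pure m [A] ∅ (E ∪ atomEqs A B) σ (Set.finite_empty) (by simp)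
      (by rintro A' hA'
          rcases List.mem_singleton.1 hA' with rfl
          exact hAfin)
      hE1fin hσ1
      (by rintro x ⟨B', hB', _⟩; exact absurd hB' (Set.notMem_empty B'))
      (by rintro x ⟨A', hA', hocc⟩
          rcases List.mem_singleton.1 hA' with rfl
          exact hdomA x hocc)
      (by intro A' hA'
          rcases List.mem_singleton.1 hA' with rfl
          rw [Set.image_empty]
          exact derivN_loopIndN hm ∅)
  obtain ⟨E3, θ3, hE3fin, hθ3sol, hOp2, hle3⟩ :=
    IHG H E2 θ2 hHfin hHsyn (fun B' hB' => hGfin B' (List.mem_cons_of_mem _ hB')) hE2fin hθ2sol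
      (fun x hx => Subst.dom_mono hle2 (hdomH hx))
      (fun x hx => Subst.dom_mono hle2 (hdomG (by
        obtain ⟨A', hA', hocc⟩ := hx
        exact ⟨A', List.mem_cons_of_mem _ hA', hocc⟩)))
      (by intro A' hA'
          rw [image_subst_eq hle2 hHsyn hdomH,
            subst_le_agree_atom hle2 (hGfin A' (List.mem_cons_of_mem _ hA'))
              (fun x hx => hdomG ⟨A', List.mem_cons_of_mem _ hA', hx⟩)]
          exact hG'loop A' hA')
  refine ⟨E3, θ3, hE3fin, hθ3sol, ?_, Subst.le_trans hle2 hle3⟩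
  exact OpSem.cohyp (G1 := []) (G2 := G') hcoP hB hpred ⟨σ, hσ1⟩ hOp1 hOp2
theorem loopIndN_cases {P coP : Set (Clause S)} {n : ℕ} {H : Set (Atom S)} {A : Atom S}
    (h : LoopIndN P coP n H A) :
    (coP ≠ ∅ ∧ A ∈ H ∧ A ∈ Ind (P ∪ coP)) ∨
      (∃ n' r, n = n' + 1 ∧ r ∈ GroundInst P ∧ r.1 = A ∧
        ∀ B ∈ r.2, LoopIndN P coP n' (H ∪ {A}) B) := by
  cases h with
  | hp h1 h2 h3 => exact Or.inl ⟨h1, h2, h3⟩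
  | rule r h1 h2 h3 => exact Or.inr ⟨_, r, rfl, h1, h2, h3⟩

theorem pure_aux (P : Set (Clause S)) : ∀ (n : ℕ) (G : List (Atom S)), St P ∅ n G := by
  intro n
  induction n using Nat.strong_induction_on with
  | _ n IHn =>
    intro G
    induction G with
    | nil => exact St_nil P ∅ n
    | cons A G' IHG =>
      intro H E σ hHfin hHsyn hGfin hE hσ hdomH hdomG hloop
      rcases loopIndN_cases (hloop A (List.mem_cons_self)) with
        ⟨h1, _, _⟩ | ⟨n', r, rfl, hr, hr1, hsub⟩
      · exact absurd rfl h1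
      · exact St_rule_case P ∅ n' A G' H E σ hHfin hHsyn hGfin hE hσ hdomH hdomG r hr hr1 hsub
          (fun A' hA' => hloop A' (List.mem_cons_of_mem _ hA'))
          (fun G => IHn n' (by omega) G) IHG

theorem main_aux (P coP : Set (Clause S)) : ∀ (n : ℕ) (G : List (Atom S)), St P coP n G := by
  intro n
  induction n using Nat.strong_induction_on with
  | _ n IHn =>
    intro G
    induction G with
    | nil => exact St_nil P coP n
    | cons A G' IHG =>
      intro H E σ hHfin hHsyn hGfin hE hσ hdomH hdomG hloop
      rcases loopIndN_cases (hloop A (List.mem_cons_self)) with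
        ⟨h1, h2, h3⟩ | ⟨n', r, rfl, hr, hr1, hsub⟩
      · obtain ⟨B, hB, hBA⟩ := h2
        exact St_cohyp_case P coP n A G' H E σ hHfin hHsyn hGfin hE hσ hdomH hdomG h1 B hB
          hBA h3
          (fun A' hA' => hloop A' (List.mem_cons_of_mem _ hA'))
          (fun m G => pure_aux (P ∪ coP) m G) IHG
      · exact St_rule_case P coP n' A G' H E σ hHfin hHsyn hGfin hE hσ hdomH hdomG r hr hr1 hsub
          (fun A' hA' => hloop A' (List.mem_cons_of_mem _ hA'))
          (fun G => IHn n' (by omega) G) IHG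

/-- Completeness w.r.t. the inductive characterization of regular semantics: if `Hσ ⊢ Aiσ`
is derivable in `Loop(P,coP)` for every atom `Ai` of the goal, then resolution of the goal
succeeds and computes an answer extending `σ`. -/
theorem completeness_wrt_loop (S : Sig) (P coP : Set (Clause S))
    (hP : P.Finite) (hcoP : coP.Finite)
    (H : Set (Atom S)) (hHfin : H.Finite) (hHsyn : ∀ B ∈ H, B.IsFinite)
    (G : List (Atom S)) (hG : ∀ A ∈ G, A.IsFinite)
    (E : Set (Eqn S)) (hE : EqnSetFin E)
    (σ : Subst S) (hσ : σ ∈ sol E)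
    (hdomH : atomsVars H ⊆ σ.dom) (hdomG : goalVars G ⊆ σ.dom)
    (h : ∀ A ∈ G, LoopInd P coP ((fun B => B.subst σ) '' H) (A.subst σ)) :
    ∃ (E' : Set (Eqn S)) (θ : Subst S), EqnSetFin E' ∧ θ ∈ sol E' ∧
      OpSem S P coP H G E E' ∧ σ.le θ := by
  obtain ⟨n, hn⟩ := list_bound
    (Q := fun n A' => LoopIndN P coP n ((fun B => B.subst σ) '' H) (A'.subst σ))
    (fun h hnm => loopIndN_mono h hnm)
    (fun A hA => loopInd_loopIndN (h A hA))
  exact main_aux P coP n G H E σ hHfin hHsyn hG hE hσ hdomH hdomG hn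

end FlexLP
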